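/- Let c > 0, let (g_d)_{d≥1} be an i.i.d. sequence of random variables each with the Gamma distribution with shape c and rate 1, and let X = (1/(2π²)) Σ_{d=1}^{∞} g_d/((d − 1/2)²). Then for every real number ω and every t ≥ 0: E[exp(−(ω²/2 + t)X)] / E[exp(−(ω²/2)X)] = (cosh(ω/2) / cosh(½√(ω² + 2t)))^{c}. Equivalently, the exponentially tilted law Q with dQ/dP = exp(−ω²X/2)/E[exp(−ω²X/2)] satisfies ∫ e^{−tX} dQ = (cosh(ω/2)/cosh(½√(ω² + 2t)))^{c}. -/

import Mathlib

open MeasureTheory Real ProbabilityTheory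
open Filter Finset Topology


lemma prod_range_two_mul (f : ℕ → ℝ) (n : ℕ) :
    ∏ j ∈ Finset.range (2 * n), f j =
      (∏ k ∈ Finset.range n, f (2 * k)) * ∏ k ∈ Finset.range n, f (2 * k + 1) := by
  induction n with
  | zero => simp
  | succ n ih =>
    have h2 : 2 * (n + 1) = (2 * n + 1) + 1 := by ring
    rw [h2, Finset.prod_range_succ, Finset.prod_range_succ, Finset.prod_range_succ,
      Finset.prod_range_succ, ih]
    ring

lemma sinh_euler (y : ℝ) :
    Tendsto (fun n : ℕ => π * y * ∏ j ∈ Finset.range n, ((1 : ℝ) + y ^ 2 / ((j : ℝ) + 1) ^ 2))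
      atTop (𝓝 (Real.sinh (π * y))) := by
  have h := Complex.tendsto_euler_sin_prod (y * Complex.I)
  have hfac : ∀ j : ℕ, (1 : ℂ) - ((y : ℂ) * Complex.I) ^ 2 / ((j : ℂ) + 1) ^ 2
      = (((1 : ℝ) + y ^ 2 / ((j : ℝ) + 1) ^ 2 : ℝ) : ℂ) := by
    intro j
    have : ((y : ℂ) * Complex.I) ^ 2 = -(y : ℂ) ^ 2 := by
      rw [mul_pow, Complex.I_sq]; ring
    rw [this]
    push_cast
    ring
  have heq : ∀ n : ℕ, (π : ℂ) * ((y : ℂ) * Complex.I) *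
      ∏ j ∈ Finset.range n, ((1 : ℂ) - ((y : ℂ) * Complex.I) ^ 2 / ((j : ℂ) + 1) ^ 2) =
      ((π * y * ∏ j ∈ Finset.range n, ((1 : ℝ) + y ^ 2 / ((j : ℝ) + 1) ^ 2) : ℝ) : ℂ) *
        Complex.I := by
    intro n
    rw [Finset.prod_congr rfl (fun j _ => hfac j)]
    push_cast
    ring
  have h2 := h.congr heq
  rw [show (π : ℂ) * ((y : ℝ) * Complex.I) = ((π * y : ℝ) : ℂ) * Complex.I from by
      push_cast; ring,
    Complex.sin_mul_I, ← Complex.ofReal_sinh] at h2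
  have him := (Complex.continuous_im.tendsto _).comp h2
  simp only [Function.comp_def, Complex.mul_I_im, Complex.ofReal_re] at him
  exact him

lemma cosh_euler (x : ℝ) :
    Tendsto (fun n : ℕ => ∏ k ∈ Finset.range n, ((1 : ℝ) + x ^ 2 / (π ^ 2 * ((k : ℝ) + 1 / 2) ^ 2)))
      atTop (𝓝 (Real.cosh x)) := by
  rcases eq_or_ne x 0 with rfl | hx
  · simpa using (tendsto_const_nhds : Tendsto (fun _ : ℕ => (1 : ℝ)) atTop (𝓝 1))
  set y : ℝ := x / π with hy
  have hπ : (π : ℝ) ≠ 0 := Real.pi_ne_zero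
  have hπy : π * y = x := by rw [hy]; field_simp
  have hy0 : y ≠ 0 := by
    intro h; apply hx; rw [← hπy, h, mul_zero]
  set A : ℕ → ℝ := fun n => π * y * ∏ j ∈ Finset.range n, ((1 : ℝ) + y ^ 2 / ((j : ℝ) + 1) ^ 2)
    with hA
  set B : ℕ → ℝ := fun n =>
      π * (2 * y) * ∏ j ∈ Finset.range n, ((1 : ℝ) + (2 * y) ^ 2 / ((j : ℝ) + 1) ^ 2) with hB
  have hAne : ∀ n, A n ≠ 0 := by
    intro n
    apply mul_ne_zero (mul_ne_zero hπ hy0)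
    apply ne_of_gt
    apply Finset.prod_pos
    intro j _
    positivity
  have hkey : ∀ n : ℕ, (1 : ℝ) + x ^ 2 / (π ^ 2 * ((n : ℝ) + 1 / 2) ^ 2)
      = 1 + (2 * y) ^ 2 / (2 * (n : ℝ) + 1) ^ 2 := by
    intro n
    have h1 : ((n : ℝ) + 1 / 2) ≠ 0 := by positivity
    have hsq : (2 * (n : ℝ) + 1) ^ 2 = 4 * ((n : ℝ) + 1 / 2) ^ 2 := by ring
    rw [hsq, hy]
    field_simp
    ring
  have hsplit : ∀ n, B (2 * n) = 2 * A n *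
      ∏ k ∈ Finset.range n, ((1 : ℝ) + x ^ 2 / (π ^ 2 * ((k : ℝ) + 1 / 2) ^ 2)) := by
    intro n
    rw [hB, hA]
    simp only
    rw [prod_range_two_mul (fun j => (1 : ℝ) + (2 * y) ^ 2 / ((j : ℝ) + 1) ^ 2) n]
    have he : ∀ k ∈ Finset.range n, (1 : ℝ) + (2 * y) ^ 2 / (((2 * k + 1 : ℕ) : ℝ) + 1) ^ 2
        = 1 + y ^ 2 / ((k : ℝ) + 1) ^ 2 := by
      intro k _
      have hk : ((k : ℝ) + 1) ≠ 0 := by positivity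
      push_cast
      field_simp
      ring
    have ho : ∀ k ∈ Finset.range n, (1 : ℝ) + (2 * y) ^ 2 / (((2 * k : ℕ) : ℝ) + 1) ^ 2
        = 1 + x ^ 2 / (π ^ 2 * ((k : ℝ) + 1 / 2) ^ 2) := by
      intro k _
      rw [hkey k]; push_cast; ring_nf
    rw [Finset.prod_congr rfl he, Finset.prod_congr rfl ho]
    ring
  have hBlim : Tendsto (fun n => B (2 * n)) atTop (𝓝 (Real.sinh (π * (2 * y)))) := by
    exact (sinh_euler (2 * y)).comp
      ((tendsto_id (α := ℕ)).const_mul_atTop' (by norm_num) |>.congr (fun n => rfl))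
  have hAlim : Tendsto A atTop (𝓝 (Real.sinh (π * y))) := sinh_euler y
  have hsA : Real.sinh (π * y) ≠ 0 := by
    rw [Real.sinh_ne_zero]
    exact mul_ne_zero hπ hy0
  have h2A : Tendsto (fun n => 2 * A n) atTop (𝓝 (2 * Real.sinh (π * y))) :=
    hAlim.const_mul 2
  have hdiv : Tendsto (fun n => B (2 * n) / (2 * A n)) atTop
      (𝓝 (Real.sinh (π * (2 * y)) / (2 * Real.sinh (π * y)))) :=
    hBlim.div h2A (by positivity)
  have hfinal : Real.sinh (π * (2 * y)) / (2 * Real.sinh (π * y)) = Real.cosh x := by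
    rw [show π * (2 * y) = 2 * (π * y) by ring, Real.sinh_two_mul, hπy]
    field_simp
  rw [hfinal] at hdiv
  apply hdiv.congr
  intro n
  rw [hsplit n, mul_comm (2 * A n), mul_div_assoc, div_self (by
    exact mul_ne_zero two_ne_zero (hAne n)), mul_one]


lemma gamma_laplace {c : ℝ} (hc : 0 < c) {u : ℝ} (hu : 0 ≤ u) :
    ∫ x, Real.exp (-u * x) ∂(gammaMeasure c 1) = (1 + u) ^ (-c) := by
  have h1u : (0 : ℝ) < 1 + u := by linarith
  have hpt : ∀ x : ℝ, Real.exp (-u * x) * gammaPDFReal c 1 x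
      = (1 + u) ^ (-c) * gammaPDFReal c (1 + u) x := by
    intro x
    simp only [gammaPDFReal]
    split_ifs with hx
    · have key : ((1 + u) : ℝ) ^ (-c) * (1 + u) ^ c = 1 := by
        rw [← Real.rpow_add h1u]; norm_num
      have hexp : Real.exp (-u * x) * Real.exp (-(1 * x)) = Real.exp (-((1 + u) * x)) := by
        rw [← Real.exp_add]; congr 1; ring
      calc Real.exp (-u * x) * ((1 : ℝ) ^ c / Gamma c * x ^ (c - 1) * Real.exp (-(1 * x)))
          = (Real.exp (-u * x) * Real.exp (-(1 * x))) * (1 / Gamma c * x ^ (c - 1)) := by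
            rw [Real.one_rpow]; ring
        _ = Real.exp (-((1 + u) * x)) * (1 / Gamma c * x ^ (c - 1)) := by rw [hexp]
        _ = ((1 + u) ^ (-c) * (1 + u) ^ c) *
              (Real.exp (-((1 + u) * x)) * (1 / Gamma c * x ^ (c - 1))) := by
            rw [key, one_mul]
        _ = (1 + u) ^ (-c) * ((1 + u) ^ c / Gamma c * x ^ (c - 1) *
              Real.exp (-((1 + u) * x))) := by ring
    · rw [mul_zero, mul_zero]
  have hm : Measurable fun x : ℝ => ENNReal.ofReal (Real.exp (-u * x)) := by fun_prop
  have hl : ∫⁻ x, ENNReal.ofReal (Real.exp (-u * x)) ∂(gammaMeasure c 1)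
      = ENNReal.ofReal ((1 + u) ^ (-c)) := by
    rw [gammaMeasure, lintegral_withDensity_eq_lintegral_mul (f := gammaPDF c 1) _
      ((measurable_gammaPDFReal c 1).ennreal_ofReal) hm]
    have hpt2 : ∀ x : ℝ, ((fun x => gammaPDF c 1 x) * fun x => ENNReal.ofReal
        (Real.exp (-u * x))) x = ENNReal.ofReal ((1 + u) ^ (-c)) * gammaPDF c (1 + u) x := by
      intro x
      simp only [Pi.mul_apply, gammaPDF]
      rw [← ENNReal.ofReal_mul (gammaPDFReal_nonneg hc one_pos x), mul_comm
        (gammaPDFReal c 1 x), hpt x, ENNReal.ofReal_mul (Real.rpow_nonneg h1u.le _)]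
    rw [lintegral_congr hpt2, lintegral_const_mul (f := gammaPDF c (1 + u)) _ ((measurable_gammaPDFReal c (1 + u)).ennreal_ofReal),
      lintegral_gammaPDF_eq_one hc h1u, mul_one]
  rw [integral_eq_lintegral_of_nonneg_ae (ae_of_all _ fun x => (Real.exp_pos _).le)
    ((by continuity : Continuous fun x : ℝ => Real.exp (-u * x)).aestronglyMeasurable), hl, ENNReal.toReal_ofReal (Real.rpow_nonneg h1u.le _)]

lemma gamma_mean {c : ℝ} (hc : 0 < c) :
    ∫⁻ x, ENNReal.ofReal x ∂(gammaMeasure c 1) = ENNReal.ofReal c := by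
  have hreal : ∀ x : ℝ, gammaPDFReal c 1 x * x = c * gammaPDFReal (c + 1) 1 x := by
    intro x
    simp only [gammaPDFReal]
    split_ifs with hx
    · have hG : Gamma (c + 1) = c * Gamma c := Real.Gamma_add_one hc.ne'
      have hxc : x ^ (c - 1) * x = x ^ c := by
        rcases eq_or_lt_of_le hx with h | h
        · rw [← h]; simp [Real.zero_rpow hc.ne']
        · rw [← Real.rpow_add_one h.ne' (c - 1)]; norm_num
      have hxc1 : x ^ (c + 1 - 1) = x ^ c := by norm_num
      rw [hG, hxc1, Real.one_rpow, Real.one_rpow, ← hxc]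
      have hGne : Gamma c ≠ 0 := (Real.Gamma_pos_of_pos hc).ne'
      field_simp
    · rw [zero_mul, mul_zero]
  have hpt : ∀ x : ℝ, ((fun x => gammaPDF c 1 x) * fun x => ENNReal.ofReal x) x
      = ENNReal.ofReal c * gammaPDF (c + 1) 1 x := by
    intro x
    simp only [Pi.mul_apply, gammaPDF]
    rcases lt_or_ge x 0 with h | h
    · rw [gammaPDFReal, if_neg (not_le.mpr h), gammaPDFReal, if_neg (not_le.mpr h)]
      simp
    · rw [← ENNReal.ofReal_mul (gammaPDFReal_nonneg hc one_pos x), hreal x,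
        ENNReal.ofReal_mul hc.le]
  rw [gammaMeasure, lintegral_withDensity_eq_lintegral_mul (f := gammaPDF c 1) _
    ((measurable_gammaPDFReal c 1).ennreal_ofReal)
    ENNReal.measurable_ofReal,
    lintegral_congr hpt, lintegral_const_mul (f := gammaPDF (c + 1) 1) _ ((measurable_gammaPDFReal (c + 1) 1).ennreal_ofReal),
    lintegral_gammaPDF_eq_one (by linarith) one_pos, mul_one]

lemma gamma_nonneg_ae {c : ℝ} {Ω : Type*} [MeasurableSpace Ω] {P : Measure Ω} {f : Ω → ℝ}
    (hf : Measurable f) (hd : P.map f = gammaMeasure c 1) : ∀ᵐ w ∂P, 0 ≤ f w := by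
  rw [ae_iff]
  have : {w | ¬0 ≤ f w} = f ⁻¹' (Set.Iio 0) := by
    ext w; simp [not_le]
  rw [this, ← Measure.map_apply hf measurableSet_Iio, hd, gammaMeasure,
    withDensity_apply _ measurableSet_Iio, lintegral_gammaPDF_of_nonpos le_rfl]


set_option maxHeartbeats 1000000 in
/-- Laplace transform of the exponentially tilted Polya-Gamma distribution PG(c, ω):
with `X` the Polya-Gamma PG(c, 0) random variable
`X = (1/(2π²)) Σ_{d≥1} g_d/(d - 1/2)²` (indexed here by `d : ℕ`, term `g d/(d + 1/2)²`),
where `(g_d)` are i.i.d. Gamma(c, 1), for every real `ω` and every `t ≥ 0`: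
`E[exp(-(ω²/2 + t)X)] / E[exp(-(ω²/2)X)] = (cosh(ω/2)/cosh(½√(ω² + 2t)))^c`. -/
theorem tilted_polya_gamma_laplace {Ω : Type*} [MeasurableSpace Ω]
    (P : Measure Ω) [IsProbabilityMeasure P]
    (c : ℝ) (hc : 0 < c) (g : ℕ → Ω → ℝ)
    (hmeas : ∀ d, Measurable (g d))
    (hindep : iIndepFun g P)
    (hdist : ∀ d, P.map (g d) = gammaMeasure c 1)
    (X : Ω → ℝ)
    (hX : ∀ w, X w = 1 / (2 * Real.pi ^ 2) * ∑' d : ℕ, g d w / ((d : ℝ) + 1 / 2) ^ 2)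
    (ω t : ℝ) (ht : 0 ≤ t) :
    (∫ w, Real.exp (-(ω ^ 2 / 2 + t) * X w) ∂P) /
        (∫ w, Real.exp (-(ω ^ 2 / 2) * X w) ∂P) =
      (Real.cosh (ω / 2) / Real.cosh (Real.sqrt (ω ^ 2 + 2 * t) / 2)) ^ c := by
  have hπ : (π : ℝ) ≠ 0 := Real.pi_ne_zero
  set a : ℕ → ℝ := fun d => 1 / (2 * π ^ 2 * ((d : ℝ) + 1 / 2) ^ 2) with ha
  have hapos : ∀ d, 0 < a d := fun d => by positivity
  have hsa : Summable a := by
    have h0 : Summable (fun n : ℕ => 1 / (n : ℝ) ^ 2) :=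
      summable_one_div_nat_pow.mpr one_lt_two
    have h1 : Summable (fun n : ℕ => 1 / ((n : ℝ) + 1) ^ 2) := by
      refine ((summable_nat_add_iff 1).mpr h0).congr fun n => ?_
      push_cast
      ring
    refine Summable.of_nonneg_of_le (fun d => (hapos d).le) (fun d => ?_)
      (h1.mul_left (2 / π ^ 2))
    have key : π ^ 2 * ((d : ℝ) + 1) ^ 2 / 2 ≤ 2 * π ^ 2 * ((d : ℝ) + 1 / 2) ^ 2 := by
      have hπ2 : (0 : ℝ) < π ^ 2 := by positivity
      have hd : (0 : ℝ) ≤ (d : ℝ) := Nat.cast_nonneg d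
      nlinarith [sq_nonneg ((d : ℝ))]
    calc a d ≤ 1 / (π ^ 2 * ((d : ℝ) + 1) ^ 2 / 2) := by
          apply one_div_le_one_div_of_le (by positivity) key
      _ = 2 / π ^ 2 * (1 / ((d : ℝ) + 1) ^ 2) := by
          rw [eq_comm]
          field_simp
  have hXa : ∀ w, X w = ∑' d, a d * g d w := by
    intro w
    have he : ∀ d : ℕ, 1 / (2 * π ^ 2) * (g d w / ((d : ℝ) + 1 / 2) ^ 2) = a d * g d w := by
      intro d
      rw [ha]
      have h2 : ((d : ℝ) + 1 / 2) ^ 2 ≠ 0 := by positivity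
      field_simp
    rw [hX w, ← tsum_mul_left]
    exact tsum_congr he
  have key : ∀ s : ℝ, 0 ≤ s →
      ∫ w, Real.exp (-s * X w) ∂P = Real.cosh (Real.sqrt (2 * s) / 2) ^ (-c) := by
    intro s hs
    set S : ℕ → Ω → ℝ := fun n w => ∑ d ∈ Finset.range n, a d * g d w with hS
    have hnn : ∀ᵐ w ∂P, ∀ d, 0 ≤ g d w :=
      ae_all_iff.mpr fun d => gamma_nonneg_ae (hmeas d) (hdist d)
    have hma : ∀ d : ℕ, Measurable fun w => ENNReal.ofReal (a d * g d w) :=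
      fun d => ((hmeas d).const_mul _).ennreal_ofReal
    have hlin : ∀ d : ℕ, ∫⁻ w, ENNReal.ofReal (a d * g d w) ∂P
        = ENNReal.ofReal (a d) * ENNReal.ofReal c := by
      intro d
      have hof : ∀ w, ENNReal.ofReal (a d * g d w)
          = ENNReal.ofReal (a d) * ENNReal.ofReal (g d w) :=
        fun w => ENNReal.ofReal_mul (hapos d).le
      simp_rw [hof]
      rw [lintegral_const_mul _ ((hmeas d).ennreal_ofReal)]
      congr 1
      rw [← lintegral_map ENNReal.measurable_ofReal (hmeas d), hdist d, gamma_mean hc]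
    have htsum : ∫⁻ w, ∑' d, ENNReal.ofReal (a d * g d w) ∂P ≠ ⊤ := by
      rw [lintegral_tsum fun d => (hma d).aemeasurable]
      simp_rw [hlin]
      rw [ENNReal.tsum_mul_right, ← ENNReal.ofReal_tsum_of_nonneg (fun d => (hapos d).le) hsa]
      exact ENNReal.mul_ne_top ENNReal.ofReal_ne_top ENNReal.ofReal_ne_top
    have hfin : ∀ᵐ w ∂P, (∑' d, ENNReal.ofReal (a d * g d w)) ≠ ⊤ := by
      filter_upwards [ae_lt_top (Measurable.ennreal_tsum hma) htsum] with w hw using hw.ne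
    have hsumm : ∀ᵐ w ∂P, Summable fun d => a d * g d w := by
      filter_upwards [hfin, hnn] with w h1 h2
      refine (ENNReal.summable_toReal h1).congr fun d => ?_
      rw [ENNReal.toReal_ofReal (mul_nonneg (hapos d).le (h2 d))]
    have hconv : ∀ᵐ w ∂P,
        Tendsto (fun n => Real.exp (-s * S n w)) atTop (𝓝 (Real.exp (-s * X w))) := by
      filter_upwards [hsumm] with w hw
      have h1 : Tendsto (fun n => S n w) atTop (𝓝 (X w)) := by
        rw [hXa w]
        exact hw.hasSum.tendsto_sum_nat
      exact (Real.continuous_exp.tendsto _).comp (h1.const_mul (-s))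
    have hSmeas : ∀ n, Measurable (S n) :=
      fun n => Finset.measurable_sum _ fun d _ => (hmeas d).const_mul (a d)
    have hSm : ∀ n, AEStronglyMeasurable (fun w => Real.exp (-s * S n w)) P := fun n =>
      (Real.measurable_exp.comp ((hSmeas n).const_mul (-s))).aestronglyMeasurable
    have hbd : ∀ n, ∀ᵐ w ∂P, ‖Real.exp (-s * S n w)‖ ≤ (fun _ => (1 : ℝ)) w := by
      intro n
      filter_upwards [hnn] with w hw
      rw [Real.norm_eq_abs, Real.abs_exp]
      rw [Real.exp_le_one_iff]
      have hSnn : 0 ≤ S n w := Finset.sum_nonneg fun d _ => mul_nonneg (hapos d).le (hw d)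
      nlinarith
    have hdct := tendsto_integral_of_dominated_convergence (μ := P)
      (F := fun n w => Real.exp (-s * S n w)) (f := fun w => Real.exp (-s * X w))
      (fun _ => (1 : ℝ)) hSm (integrable_const 1) hbd hconv
    have hval : ∀ n, ∫ w, Real.exp (-s * S n w) ∂P
        = ∏ d ∈ Finset.range n, ((1 : ℝ) + s * a d) ^ (-c) := by
      intro n
      have hind2 : iIndepFun (fun d w => a d * g d w) P :=
        hindep.comp (fun d (x : ℝ) => a d * x) fun d => measurable_const_mul (a d)
      have hmgf := hind2.mgf_sum (fun d => (hmeas d).const_mul (a d)) (Finset.range n)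
        (t := -s)
      have hL : mgf (∑ d ∈ Finset.range n, fun w => a d * g d w) P (-s)
          = ∫ w, Real.exp (-s * S n w) ∂P := by
        simp only [mgf, Finset.sum_apply, hS]
      rw [← hL, hmgf]
      refine Finset.prod_congr rfl fun d _ => ?_
      have hmg : mgf (fun w => a d * g d w) P (-s)
          = ∫ w, Real.exp (-(s * a d) * g d w) ∂P := by
        simp only [mgf]
        congr 1
        funext w
        congr 1
        ring
      rw [hmg, ← integral_map (hmeas d).aemeasurable
        ((by fun_prop : Continuous fun x : ℝ => Real.exp (-(s * a d) * x)).aestronglyMeasurable),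
        hdist d, gamma_laplace hc (mul_nonneg hs (hapos d).le)]
    set x := Real.sqrt (2 * s) / 2 with hx
    have hx2 : x ^ 2 = s / 2 := by
      rw [hx, div_pow, Real.sq_sqrt (by linarith)]
      ring
    have hterm : ∀ d : ℕ, (1 : ℝ) + x ^ 2 / (π ^ 2 * ((d : ℝ) + 1 / 2) ^ 2)
        = 1 + s * a d := by
      intro d
      rw [hx2, ha]
      have h2 : ((d : ℝ) + 1 / 2) ^ 2 ≠ 0 := by positivity
      field_simp
    have hprod : Tendsto (fun n => ∏ d ∈ Finset.range n, ((1 : ℝ) + s * a d)) atTop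
        (𝓝 (Real.cosh x)) :=
      (cosh_euler x).congr fun n => Finset.prod_congr rfl fun d _ => hterm d
    have hrpow : Tendsto (fun n => (∏ d ∈ Finset.range n, ((1 : ℝ) + s * a d)) ^ (-c)) atTop
        (𝓝 (Real.cosh x ^ (-c))) :=
      ((Real.continuousAt_rpow_const _ _ (Or.inl (Real.cosh_pos x).ne')).tendsto.comp hprod)
    have hval2 : ∀ n, ∫ w, Real.exp (-s * S n w) ∂P
        = (∏ d ∈ Finset.range n, ((1 : ℝ) + s * a d)) ^ (-c) := by
      intro n
      rw [hval n, ← Real.finset_prod_rpow _ _ (fun d _ => by positivity) (-c)]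
    exact tendsto_nhds_unique hdct (hrpow.congr fun n => (hval2 n).symm)
  have h1 : (0 : ℝ) ≤ ω ^ 2 / 2 + t := by positivity
  have h0 : (0 : ℝ) ≤ ω ^ 2 / 2 := by positivity
  rw [key _ h1, key _ h0]
  have e1 : Real.sqrt (2 * (ω ^ 2 / 2 + t)) = Real.sqrt (ω ^ 2 + 2 * t) := by
    congr 1
    ring
  have e2 : Real.cosh (Real.sqrt (2 * (ω ^ 2 / 2)) / 2) = Real.cosh (ω / 2) := by
    rw [show 2 * (ω ^ 2 / 2) = ω ^ 2 by ring, Real.sqrt_sq_eq_abs,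
      show |ω| / 2 = |ω / 2| by rw [abs_div]; norm_num, Real.cosh_abs]
  rw [e1, e2]
  have hA : (0 : ℝ) < Real.cosh (ω / 2) := Real.cosh_pos _
  have hB : (0 : ℝ) < Real.cosh (Real.sqrt (ω ^ 2 + 2 * t) / 2) := Real.cosh_pos _
  rw [Real.div_rpow hA.le hB.le, Real.rpow_neg hB.le, Real.rpow_neg hA.le, inv_div_inv]
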